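/- Let M be a supported model of a normal logic program P. Then M is an answer set of P if and only if there exists a level ranking of M for P, i.e., a function lr : M → ℕ such that for each a ∈ M there is a rule r ∈ P_M with H(r) = a and lr(b) ≤ lr(a) − 1 for every b ∈ B+(r). -/
import Mathlib


structure NRule (α : Type) where
  head : α
  pos : Finset α
  neg : Finset α

def satRule {α : Type} (M : Set α) (r : NRule α) : Prop :=
  ↑r.pos ⊆ M → (↑r.neg ∩ M : Set α) = ∅ → r.head ∈ M

def isModel {α : Type} (M : Set α) (P : Set (NRule α)) : Prop :=
  ∀ r ∈ P, satRule M r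

def reduct {α : Type} (P : Set (NRule α)) (M : Set α) : Set (NRule α) :=
  (fun r => ⟨r.head, r.pos, ∅⟩) '' {r ∈ P | (↑r.neg ∩ M : Set α) = ∅}

def isMinModel {α : Type} (M : Set α) (P : Set (NRule α)) : Prop :=
  isModel M P ∧ ∀ M' ⊆ M, isModel M' P → M' = M

def isAnswerSet {α : Type} (M : Set α) (P : Set (NRule α)) : Prop :=
  isMinModel M (reduct P M)

def isSupported {α : Type} (M : Set α) (P : Set (NRule α)) : Prop :=
  isModel M P ∧ ∀ a ∈ M, ∃ r ∈ P, r.head = a ∧ ↑r.pos ⊆ M ∧ (↑r.neg ∩ M : Set α) = ∅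

def isDefinite {α : Type} (P : Set (NRule α)) : Prop :=
  ∀ r ∈ P, r.neg = ∅

def isLocallyStratified {α : Type} (P : Set (NRule α)) : Prop :=
  ∃ l : α → ℕ, ∀ r ∈ P, (∀ b ∈ r.pos, l b ≤ l r.head) ∧ (∀ c ∈ r.neg, l c < l r.head)

def hasLevelRanking {α : Type} (M : Set α) (P : Set (NRule α)) : Prop :=
  ∃ lr : α → ℕ, ∀ a ∈ M, ∃ r ∈ P, r.head = a ∧ ↑r.pos ⊆ M ∧ (↑r.neg ∩ M : Set α) = ∅ ∧
    ∀ b ∈ r.pos, lr b + 1 ≤ lr a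

/-- Derivation stages: `Sseq P M k` is the set of atoms derivable in at most `k` steps
from rules of `P` whose negative body avoids `M`. -/
def Sseq {α : Type} (P : Set (NRule α)) (M : Set α) : ℕ → Set α
  | 0 => ∅
  | k+1 => {a | ∃ r ∈ P, r.head = a ∧ ↑r.pos ⊆ Sseq P M k ∧ (↑r.neg ∩ M : Set α) = ∅}

lemma Sseq_mono {α : Type} (P : Set (NRule α)) (M : Set α) :
    ∀ {k l : ℕ}, k ≤ l → Sseq P M k ⊆ Sseq P M l := by
  have step : ∀ k, Sseq P M k ⊆ Sseq P M (k+1) := by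
    intro k
    induction k with
    | zero => intro a ha; exact absurd ha (by simp [Sseq])
    | succ k ih =>
      rintro a ⟨r, hr, hh, hpos, hneg⟩
      exact ⟨r, hr, hh, fun b hb => ih (hpos hb), hneg⟩
  intro k l hkl
  induction hkl with
  | refl => exact fun _ h => h
  | step _ ih => exact fun a ha => step _ (ih ha)

lemma Sseq_subset {α : Type} {P : Set (NRule α)} {M : Set α} (hM : isModel M P) :
    ∀ k, Sseq P M k ⊆ M := by
  intro k
  induction k with
  | zero => intro a ha; exact absurd ha (by simp [Sseq])
  | succ k ih =>
    rintro a ⟨r, hr, hh, hpos, hneg⟩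
    have := hM r hr (fun b hb => ih (hpos hb)) hneg
    rwa [hh] at this

theorem stmt_6 {α : Type} (P : Set (NRule α)) (hP : P.Finite) (M : Set α)
    (hs : isSupported M P) :
    isAnswerSet M P ↔ hasLevelRanking M P := by
  constructor
  · rintro ⟨hmod, hmin⟩
    -- the union of the stages is a model of the reduct, contained in M, hence equals M
    set N : Set α := ⋃ k, Sseq P M k with hN
    have hNM : N ⊆ M := by
      rintro a ha
      rcases Set.mem_iUnion.mp ha with ⟨k, hk⟩
      exact Sseq_subset hs.1 k hk
    have hNmod : isModel N (reduct P M) := by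
      rintro r' ⟨r, ⟨hrP, hrneg⟩, rfl⟩
      intro hpos _
      -- each b in r.pos is in some stage; take the max
      have hstage : ∀ b ∈ r.pos, ∃ k, b ∈ Sseq P M k := by
        intro b hb
        exact Set.mem_iUnion.mp (hpos hb)
      choose f hf using hstage
      classical
      obtain ⟨K, hK⟩ : ∃ K, ∀ b (hb : b ∈ r.pos), f b hb ≤ K := by
        refine ⟨(r.pos.attach.sup fun b => f b.1 b.2), ?_⟩
        intro b hb
        exact Finset.le_sup (f := fun b : {x // x ∈ r.pos} => f b.1 b.2)
          (Finset.mem_attach _ ⟨b, hb⟩)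
      have : r.head ∈ Sseq P M (K+1) :=
        ⟨r, hrP, rfl, fun b hb => Sseq_mono P M (hK b hb) (hf b hb), hrneg⟩
      exact Set.mem_iUnion.mpr ⟨K+1, this⟩
    have hNeq : N = M := hmin N hNM hNmod
    classical
    refine ⟨fun a => if h : ∃ k, a ∈ Sseq P M k then Nat.find h else 0, ?_⟩
    intro a ha
    have hex : ∃ k, a ∈ Sseq P M k := Set.mem_iUnion.mp (hNeq.ge ha)
    have hfind : a ∈ Sseq P M (Nat.find hex) := Nat.find_spec hex
    have hne : Nat.find hex ≠ 0 := by
      intro h0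
      rw [h0] at hfind
      exact absurd hfind (by simp [Sseq])
    obtain ⟨k, hk⟩ := Nat.exists_eq_succ_of_ne_zero hne
    rw [hk] at hfind
    obtain ⟨r, hrP, hh, hpos, hneg⟩ := hfind
    refine ⟨r, hrP, hh, fun b hb => Sseq_subset hs.1 k (hpos hb), hneg, ?_⟩
    intro b hb
    have hbex : ∃ l, b ∈ Sseq P M l := ⟨k, hpos hb⟩
    have hble : Nat.find hbex ≤ k := Nat.find_le (hpos hb)
    simp only [dif_pos hbex, dif_pos hex]
    omega
  · rintro ⟨lr, hlr⟩
    constructor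
    · -- M is a model of the reduct
      rintro r' ⟨r, ⟨hrP, hrneg⟩, rfl⟩
      intro hpos _
      exact hs.1 r hrP hpos hrneg
    · intro M' hM'M hM'mod
      apply Set.Subset.antisymm hM'M
      -- show M ⊆ M' by strong induction on lr
      have key : ∀ n, ∀ a ∈ M, lr a < n → a ∈ M' := by
        intro n
        induction n with
        | zero => intro a _ h; omega
        | succ n ih =>
          intro a ha hlt
          obtain ⟨r, hrP, hh, hpos, hneg, hrank⟩ := hlr a ha
          have : satRule M' ⟨r.head, r.pos, ∅⟩ :=
            hM'mod _ ⟨r, ⟨hrP, hneg⟩, rfl⟩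
          have hposM' : ↑r.pos ⊆ M' := by
            intro b hb
            have hbM : b ∈ M := hpos hb
            have : lr b < n := by have := hrank b hb; omega
            exact ih b hbM this
          have := this hposM' (by simp)
          rwa [hh] at this
      intro a ha
      exact key (lr a + 1) a ha (by omega)
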